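/- Let G be a finite connected split graph with clique part K and independent part S, and let D be a distance-2 dominating set of G. For any u ∈ D and any neighbor v of u with v ∉ D, if (D \ {u}) ∩ K is nonempty, then (D \ {u}) ∪ {v} is a distance-2 dominating set of G. -/
import Mathlib


/-- `D` is a distance-`r` dominating set of `G`: every vertex is within
distance `r` (along a path) of some member of `D`. -/
def IsDrDS {V : Type*} (G : SimpleGraph V) (r : ℕ) (D : Set V) : Prop :=
  ∀ v : V, ∃ u ∈ D, G.Reachable u v ∧ G.dist u v ≤ r

theorem stmt3 {V : Type*} [Fintype V] (G : SimpleGraph V) (K S : Set V)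
    (hpart : K ∪ S = Set.univ) (hdisj : Disjoint K S)
    (hK : G.IsClique K) (hS : ∀ a ∈ S, ∀ b ∈ S, ¬ G.Adj a b)
    (hconn : G.Connected)
    (D : Set V) (hD : IsDrDS G 2 D)
    (u : V) (hu : u ∈ D) (v : V) (hadj : G.Adj u v) (hv : v ∉ D)
    (hne : ((D \ {u}) ∩ K).Nonempty) :
    IsDrDS G 2 ((D \ {u}) ∪ {v}) := by
  obtain ⟨k, hkDu, hkK⟩ := hne
  have hku : k ≠ u := by
    intro h; exact hkDu.2 (by simp [h])
  have hkN : k ∈ (D \ {u}) ∪ {v} := Or.inl hkDu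
  have hreach : ∀ a b : V, G.Reachable a b := fun a b => hconn.preconnected a b
  have hd1 : ∀ {a b : V}, G.Adj a b → G.dist a b ≤ 1 := by
    intro a b h
    have := SimpleGraph.dist_le h.toWalk
    simpa using this
  have hd2 : ∀ {a b c : V}, G.Adj a b → G.Adj b c → G.dist a c ≤ 2 := by
    intro a b c h h'
    have := SimpleGraph.dist_le (SimpleGraph.Walk.cons h h'.toWalk)
    simpa using this
  have hKS : ∀ a : V, a ∈ K ∨ a ∈ S := by
    intro a
    have : a ∈ K ∪ S := by rw [hpart]; trivial
    exact this
  have hdomK : ∀ t : V, t ∈ K → ∃ z ∈ (D \ {u}) ∪ {v}, G.Reachable z t ∧ G.dist z t ≤ 2 := by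
    intro t htK
    by_cases hkt : k = t
    · exact ⟨k, hkN, hreach k t, by rw [hkt, SimpleGraph.dist_self]; norm_num⟩
    · exact ⟨k, hkN, hreach k t, le_trans (hd1 (hK hkK htK hkt)) (by norm_num)⟩
  intro w
  obtain ⟨x, hxD, hxr, hxd⟩ := hD w
  by_cases hxu : x = u
  · subst hxu
    obtain ⟨p, hp⟩ := hxr.exists_walk_length_eq_dist
    have hplen : p.length ≤ 2 := by omega
    match hl : p.length, hplen with
    | 0, _ =>
      have hxw : x = w := SimpleGraph.Walk.eq_of_length_eq_zero hl
      exact ⟨v, Or.inr rfl, hreach v w, le_trans (hd1 (hxw ▸ hadj.symm)) (by norm_num)⟩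
    | 1, _ =>
      have h1 : G.Adj x w := by
        have := p.adj_getVert_succ (i := 0) (by omega)
        rwa [SimpleGraph.Walk.getVert_zero, show (0+1 : ℕ) = p.length by omega,
          SimpleGraph.Walk.getVert_length] at this
      rcases hKS w with hwK | hwS
      · exact hdomK w hwK
      · rcases hKS x with hxK | hxS
        · exact ⟨k, hkN, hreach k w, hd2 (hK hkK hxK hku) h1⟩
        · exact absurd h1 (hS x hxS w hwS)
    | 2, _ =>
      set m := p.getVert 1 with hm
      have h1 : G.Adj x m := by
        have := p.adj_getVert_succ (i := 0) (by omega)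
        rwa [SimpleGraph.Walk.getVert_zero] at this
      have h2 : G.Adj m w := by
        have := p.adj_getVert_succ (i := 1) (by omega)
        rwa [show (1+1 : ℕ) = p.length by omega, SimpleGraph.Walk.getVert_length] at this
      rcases hKS m with hmK | hmS
      · by_cases hkm : k = m
        · exact ⟨k, hkN, hreach k w, le_trans (hd1 (hkm ▸ h2)) (by norm_num)⟩
        · exact ⟨k, hkN, hreach k w, hd2 (hK hkK hmK hkm) h2⟩
      · rcases hKS w with hwK | hwS
        · exact hdomK w hwK
        · exact absurd h2.symm (hS w hwS m hmS)
  · exact ⟨x, Or.inl ⟨hxD, hxu⟩, hxr, hxd⟩
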